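/- Let 0 < γ ≤ 1 and let ρ_k, ρ_r, ρ_f, ρ_jam, M_e > 0 and T_d, T > 0 be constants. Define R(M) = [ (T_d/T)·( log(1 + M^{1+γ} ρ_k ρ_r / ((ρ_f+ρ_jam+1)(ρ_r M^γ + ρ_jam + 1))) − log(1 + M_e ρ_k + M_e M ρ_k ρ_jam/(ρ_r M^γ + ρ_jam + 1)) ) ]⁺. Then for every ε > 0 there exists G(ε) such that for all M ≥ G(ε): R(M)/log M ≥ (T_d/T)·γ − ε. -/
import Mathlib


open Filter Real

private lemma aux1 (ρk ρr ρf ρjam M x : ℝ) (hρk : 0 < ρk) (hρr : 0 < ρr)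
    (hρf : 0 < ρf) (hρjam : 0 < ρjam) (hM : 0 < M) (hx : 1 ≤ x) :
    ρk * ρr / ((ρf + ρjam + 1) * (ρr + ρjam + 1)) * M ≤
      M * x * ρk * ρr / ((ρf + ρjam + 1) * (ρr * x + ρjam + 1)) := by
  have hx0 : 0 < x := by linarith
  rw [div_mul_eq_mul_div, div_le_div_iff₀ (by positivity) (by positivity)]
  have key : ρr * x + ρjam + 1 ≤ x * (ρr + ρjam + 1) := by nlinarith
  nlinarith [mul_le_mul_of_nonneg_left key
    (show (0:ℝ) ≤ ρk * ρr * M * (ρf + ρjam + 1) by positivity)]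

private lemma aux2 (Me ρk ρr ρjam x y : ℝ) (hMe : 0 < Me) (hρk : 0 < ρk)
    (hρr : 0 < ρr) (hρjam : 0 < ρjam) (hx : 1 ≤ x) (hy : 1 ≤ y) :
    1 + Me * ρk + Me * (x * y) * ρk * ρjam / (ρr * x + ρjam + 1) ≤
      (1 + Me * ρk + Me * ρk * ρjam / ρr) * y := by
  have hx0 : 0 < x := by linarith
  have hy0 : 0 < y := by linarith
  have h3 : Me * (x * y) * ρk * ρjam / (ρr * x + ρjam + 1) ≤ Me * ρk * ρjam / ρr * y := by
    rw [div_mul_eq_mul_div, div_le_div_iff₀ (by positivity) hρr]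
    nlinarith [mul_pos (mul_pos (mul_pos (mul_pos hMe hρk) hρjam) hy0)
      (show (0:ℝ) < ρjam + 1 by linarith)]
  have h4 : 1 + Me * ρk ≤ (1 + Me * ρk) * y := by nlinarith [mul_pos hMe hρk]
  nlinarith [h3, h4]

private lemma aux3 (t ε γ L C : ℝ) (ht : 0 ≤ t) (h2 : t * C ≤ ε * L) :
    (t * γ - ε) * L ≤ t * (γ * L - C) := by nlinarith

set_option maxHeartbeats 800000 in
/-- Theorem 4 (achievable rate under training-phase jamming with hidden pilots):
for 0 < γ ≤ 1, R(M)/log₂ M ≥ (T_d/T)γ − ε for all sufficiently large M. -/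
theorem stmt_13 (γ ρk ρr ρf ρjam Me Td T : ℝ) (hγ0 : 0 < γ) (hγ1 : γ ≤ 1)
    (hρk : 0 < ρk) (hρr : 0 < ρr) (hρf : 0 < ρf) (hρjam : 0 < ρjam)
    (hMe : 0 < Me) (hTd : 0 < Td) (hT : 0 < T) :
    ∀ ε > (0:ℝ), ∃ G : ℝ, ∀ M : ℝ, G ≤ M →
      max ((Td / T) * (Real.logb 2 (1 + M ^ ((1:ℝ) + γ) * ρk * ρr /
              ((ρf + ρjam + 1) * (ρr * M ^ γ + ρjam + 1)))
          - Real.logb 2 (1 + Me * ρk + Me * M * ρk * ρjam / (ρr * M ^ γ + ρjam + 1)))) 0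
        / Real.logb 2 M ≥ (Td / T) * γ - ε := by
  intro ε hε
  set c1 : ℝ := ρk * ρr / ((ρf + ρjam + 1) * (ρr + ρjam + 1)) with hc1def
  set c2 : ℝ := 1 + Me * ρk + Me * ρk * ρjam / ρr with hc2def
  have hc1 : 0 < c1 := by positivity
  have hc2 : 0 < c2 := by positivity
  set C : ℝ := Real.logb 2 c2 - Real.logb 2 c1 with hCdef
  set K : ℝ := max 1 (max (C / γ) (Td / T * C / ε)) with hKdef
  refine ⟨2 ^ K, ?_⟩
  intro M hM
  have hK1 : (1:ℝ) ≤ K := le_max_left _ _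
  have h2K : (2:ℝ) ≤ 2 ^ K := by
    calc (2:ℝ) = 2 ^ (1:ℝ) := (Real.rpow_one 2).symm
    _ ≤ 2 ^ K := (Real.rpow_le_rpow_left_iff (by norm_num)).mpr hK1
  have hM2 : (2:ℝ) ≤ M := le_trans h2K hM
  have hM1 : (1:ℝ) ≤ M := by linarith
  have hM0 : (0:ℝ) < M := by linarith
  set L : ℝ := Real.logb 2 M with hLdef
  have hLK : K ≤ L := by
    have : Real.logb 2 ((2:ℝ) ^ K) ≤ Real.logb 2 M :=
      Real.logb_le_logb_of_le (by norm_num) (by positivity) hM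
    rwa [Real.logb_rpow (by norm_num) (by norm_num)] at this
  have hL1 : (1:ℝ) ≤ L := le_trans hK1 hLK
  have hL0 : (0:ℝ) < L := by linarith
  have hx1 : (1:ℝ) ≤ M ^ γ := Real.one_le_rpow hM1 hγ0.le
  have hx0 : (0:ℝ) < M ^ γ := by linarith
  have hy1 : (1:ℝ) ≤ M ^ ((1:ℝ) - γ) := Real.one_le_rpow hM1 (by linarith)
  have hy0 : (0:ℝ) < M ^ ((1:ℝ) - γ) := by linarith
  have hxy : M ^ γ * M ^ ((1:ℝ) - γ) = M := by
    rw [← Real.rpow_add hM0]; norm_num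
  have hMsplit : M ^ ((1:ℝ) + γ) = M * M ^ γ := by
    rw [Real.rpow_add hM0, Real.rpow_one]
  set x : ℝ := M ^ γ with hxdef
  set y : ℝ := M ^ ((1:ℝ) - γ) with hydef
  have hd0 : (0:ℝ) < ρr * x + ρjam + 1 := by positivity
  set A : ℝ := M ^ ((1:ℝ) + γ) * ρk * ρr / ((ρf + ρjam + 1) * (ρr * x + ρjam + 1)) with hAdef
  set B : ℝ := 1 + Me * ρk + Me * M * ρk * ρjam / (ρr * x + ρjam + 1) with hBdef
  have hA0 : 0 < A := by rw [hAdef]; positivity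
  have hB0 : 0 < B := by rw [hBdef]; positivity
  have h1 : c1 * M ≤ A := by
    rw [hAdef, hc1def, hMsplit]
    exact aux1 ρk ρr ρf ρjam M x hρk hρr hρf hρjam hM0 hx1
  have h2 : B ≤ c2 * y := by
    rw [hBdef, hc2def, ← hxy]
    exact aux2 Me ρk ρr ρjam x y hMe hρk hρr hρjam hx1 hy1
  have hlog1 : Real.logb 2 (c1 * M) ≤ Real.logb 2 (1 + A) :=
    Real.logb_le_logb_of_le (by norm_num) (by positivity) (by linarith)
  have hlog2 : Real.logb 2 B ≤ Real.logb 2 (c2 * y) :=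
    Real.logb_le_logb_of_le (by norm_num) hB0 h2
  have hexp1 : Real.logb 2 (c1 * M) = Real.logb 2 c1 + L := by
    rw [Real.logb_mul (ne_of_gt hc1) (ne_of_gt hM0), hLdef]
  have hexp2 : Real.logb 2 (c2 * y) = Real.logb 2 c2 + (1 - γ) * L := by
    rw [Real.logb_mul (ne_of_gt hc2) (ne_of_gt hy0), hydef,
      Real.logb_rpow_eq_mul_logb_of_pos hM0, hLdef]
  have hD : γ * L - C ≤ Real.logb 2 (1 + A) - Real.logb 2 B := by
    rw [hexp1] at hlog1
    rw [hexp2] at hlog2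
    rw [hCdef]; linarith
  have hKC1 : C / γ ≤ L := le_trans (le_trans (le_max_left _ _) (le_max_right _ _)) hLK
  have hKC2 : Td / T * C / ε ≤ L := le_trans (le_trans (le_max_right _ _) (le_max_right _ _)) hLK
  have hγL : C ≤ γ * L := by
    rw [div_le_iff₀ hγ0] at hKC1; linarith
  have hTC : Td / T * C ≤ ε * L := by
    rw [div_le_iff₀ hε] at hKC2; linarith
  have hTdT : (0:ℝ) < Td / T := by positivity
  have hE : (Td / T) * (γ * L - C) ≤ (Td / T) * (Real.logb 2 (1 + A) - Real.logb 2 B) :=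
    mul_le_mul_of_nonneg_left hD hTdT.le
  have hmax : ((Td / T) * γ - ε) * L ≤
      max ((Td / T) * (Real.logb 2 (1 + A) - Real.logb 2 B)) 0 := by
    refine le_trans (le_trans ?_ hE) (le_max_left _ _)
    exact aux3 (Td / T) ε γ L C hTdT.le hTC
  rw [ge_iff_le, le_div_iff₀ hL0]
  exact hmax
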